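/- arXiv:2411.15803 — 3 statements merged into one kernel-verified Lean document; each statement's English description precedes it below -/
import Mathlib

section
/- Legendre's relation: for every k with 0 < k < 1, K(k)·E(k') + E(k)·K(k') − K(k)·K(k') = π/2, where k' = √(1−k²). -/
open Real MeasureTheory intervalIntegral

/-- The complete elliptic integral of the first kind. -/
noncomputable def EllipticK (k : ℝ) : ℝ :=
  ∫ θ in (0:ℝ)..(π / 2), 1 / Real.sqrt (1 - k ^ 2 * Real.sin θ ^ 2)

/-- The complete elliptic integral of the second kind. -/
noncomputable def EllipticE (k : ℝ) : ℝ :=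
  ∫ θ in (0:ℝ)..(π / 2), Real.sqrt (1 - k ^ 2 * Real.sin θ ^ 2)

namespace Legendre

lemma X_pos {a : ℝ} (ha : a ^ 2 < 1) (θ : ℝ) : 0 < 1 - a ^ 2 * Real.sin θ ^ 2 := by
  nlinarith [Real.sin_sq_le_one θ, sq_nonneg (Real.sin θ), sq_nonneg a]

lemma sqrtX_pos {a : ℝ} (ha : a ^ 2 < 1) (θ : ℝ) :
    0 < Real.sqrt (1 - a ^ 2 * Real.sin θ ^ 2) := Real.sqrt_pos.2 (X_pos ha θ)

lemma contE (a : ℝ) : Continuous (fun θ => Real.sqrt (1 - a ^ 2 * Real.sin θ ^ 2)) := by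
  fun_prop

lemma contK {a : ℝ} (ha : a ^ 2 < 1) :
    Continuous (fun θ => 1 / Real.sqrt (1 - a ^ 2 * Real.sin θ ^ 2)) :=
  Continuous.div continuous_const (contE a) (fun θ => ne_of_gt (sqrtX_pos ha θ))

lemma intE (a : ℝ) :
    IntervalIntegrable (fun θ => Real.sqrt (1 - a ^ 2 * Real.sin θ ^ 2)) volume 0 (π/2) :=
  (contE a).intervalIntegrable _ _

lemma intK {a : ℝ} (ha : a ^ 2 < 1) :
    IntervalIntegrable (fun θ => 1 / Real.sqrt (1 - a ^ 2 * Real.sin θ ^ 2)) volume 0 (π/2) :=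
  (contK ha).intervalIntegrable _ _

lemma hasDerivAt_sqrtX {s : ℝ} (x : ℝ) (hx : 1 - x ^ 2 * s ^ 2 ≠ 0) :
    HasDerivAt (fun a => Real.sqrt (1 - a ^ 2 * s ^ 2))
      (-(x * s ^ 2) / Real.sqrt (1 - x ^ 2 * s ^ 2)) x := by
  have h1 : HasDerivAt (fun a : ℝ => 1 - a ^ 2 * s ^ 2) (-(2 * x * s ^ 2)) x := by
    have := ((hasDerivAt_pow 2 x).mul_const (s ^ 2)).const_sub 1
    simpa using this.congr_deriv (by ring)
  have := (Real.hasDerivAt_sqrt hx).comp x h1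
  exact this.congr_deriv (by ring)

lemma hasDerivAt_invsqrtX {s : ℝ} (x : ℝ) (hx : 0 < 1 - x ^ 2 * s ^ 2) :
    HasDerivAt (fun a => 1 / Real.sqrt (1 - a ^ 2 * s ^ 2))
      (x * s ^ 2 / Real.sqrt (1 - x ^ 2 * s ^ 2) ^ 3) x := by
  have h0 := hasDerivAt_sqrtX x (ne_of_gt hx)
  have hs : Real.sqrt (1 - x ^ 2 * s ^ 2) ≠ 0 := ne_of_gt (Real.sqrt_pos.2 hx)
  have h2 := h0.inv hs
  simp only [one_div]
  exact h2.congr_deriv (by ring)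

lemma ball_sq_lt {a x : ℝ} (h0 : 0 < a) (h1 : a < 1)
    (hx : x ∈ Metric.ball a ((1 - a)/2)) : x ^ 2 < ((1 + a)/2) ^ 2 := by
  rw [Metric.mem_ball, Real.dist_eq, abs_lt] at hx
  have h : |x| < (1 + a)/2 := by rw [abs_lt]; constructor <;> linarith [hx.1, hx.2]
  calc x ^ 2 = |x| ^ 2 := (sq_abs x).symm
  _ < ((1 + a)/2) ^ 2 := by nlinarith [abs_nonneg x]

lemma b_sq_lt_one {a : ℝ} (h0 : 0 < a) (h1 : a < 1) : ((1 + a)/2) ^ 2 < 1 := by nlinarith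

lemma abs_le_of_sq_le {x b : ℝ} (hb : 0 ≤ b) (h : x ^ 2 ≤ b ^ 2) : |x| ≤ b := by
  nlinarith [abs_nonneg x, sq_abs x]

lemma num_bound {x b θ : ℝ} (hb : 0 ≤ b) (h : x ^ 2 ≤ b ^ 2) :
    |x| * |Real.sin θ ^ 2| ≤ b := by
  have h1 : |Real.sin θ ^ 2| ≤ 1 := by
    rw [abs_of_nonneg (sq_nonneg _)]; exact Real.sin_sq_le_one θ
  have h2 := abs_le_of_sq_le hb h
  nlinarith [abs_nonneg x]

lemma denom_bound {x b θ : ℝ} (hb2 : b ^ 2 < 1) (h : x ^ 2 ≤ b ^ 2) :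
    Real.sqrt (1 - b ^ 2) ≤ Real.sqrt (1 - x ^ 2 * Real.sin θ ^ 2) := by
  apply Real.sqrt_le_sqrt
  nlinarith [Real.sin_sq_le_one θ, sq_nonneg (Real.sin θ), sq_nonneg x]

/-- derivative of E under the integral sign -/
lemma hasDerivAt_EllipticE {a : ℝ} (h0 : 0 < a) (h1 : a < 1) :
    HasDerivAt EllipticE ((EllipticE a - EllipticK a) / a) a := by
  have ha2 : a ^ 2 < 1 := by nlinarith
  have hb0 : (0:ℝ) ≤ (1 + a)/2 := by linarith
  have hb2 : ((1 + a)/2) ^ 2 < 1 := b_sq_lt_one h0 h1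
  have hεpos : (0:ℝ) < (1 - a)/2 := by linarith
  have H := intervalIntegral.hasDerivAt_integral_of_dominated_loc_of_deriv_le
    (F := fun x θ => Real.sqrt (1 - x ^ 2 * Real.sin θ ^ 2))
    (F' := fun x θ => -(x * Real.sin θ ^ 2) / Real.sqrt (1 - x ^ 2 * Real.sin θ ^ 2))
    (x₀ := a) (a := 0) (b := π/2) (μ := volume)
    (bound := fun _ => (1 + a)/2 / Real.sqrt (1 - ((1 + a)/2) ^ 2)) (Metric.ball_mem_nhds a hεpos)
    (Filter.Eventually.of_forall fun x => (contE x).aestronglyMeasurable)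
    (intE a)
    (by
      apply Continuous.aestronglyMeasurable
      exact Continuous.div (by fun_prop) (contE a) (fun θ => ne_of_gt (sqrtX_pos ha2 θ)))
    (Filter.Eventually.of_forall fun θ _ x hx => by
      have hx2 := (ball_sq_lt h0 h1 hx).le
      simp only [Real.norm_eq_abs, abs_div, abs_neg, abs_mul]
      rw [abs_of_nonneg (Real.sqrt_nonneg _)]
      exact div_le_div₀ hb0 (num_bound hb0 hx2)
        (Real.sqrt_pos.2 (by linarith)) (denom_bound hb2 hx2))
    (_root_.intervalIntegrable_const)
    (Filter.Eventually.of_forall fun θ _ x hx => by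
      have hx2 := ball_sq_lt h0 h1 hx
      exact hasDerivAt_sqrtX x (ne_of_gt (X_pos (lt_trans hx2 hb2) θ)))
  have hval : (∫ θ in (0:ℝ)..(π/2), -(a * Real.sin θ ^ 2) / Real.sqrt (1 - a ^ 2 * Real.sin θ ^ 2))
      = (EllipticE a - EllipticK a) / a := by
    rw [eq_div_iff (ne_of_gt h0), ← intervalIntegral.integral_mul_const]
    rw [EllipticE, EllipticK, ← intervalIntegral.integral_sub (intE a) (intK ha2)]
    apply intervalIntegral.integral_congr
    intro θ _
    have hr2 := Real.sq_sqrt (X_pos ha2 θ).le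
    have hrne := ne_of_gt (sqrtX_pos ha2 θ)
    field_simp
    linear_combination (-1 : ℝ) * hr2
  exact hval ▸ H.2

lemma contGd {a : ℝ} (ha : a ^ 2 < 1) :
    Continuous (fun θ => (Real.cos θ ^ 2 - Real.sin θ ^ 2) / Real.sqrt (1 - a ^ 2 * Real.sin θ ^ 2)
      + a ^ 2 * Real.sin θ ^ 2 * Real.cos θ ^ 2 / Real.sqrt (1 - a ^ 2 * Real.sin θ ^ 2) ^ 3) := by
  apply Continuous.add
  · exact Continuous.div (by fun_prop) (by fun_prop) (fun θ => ne_of_gt (sqrtX_pos ha θ))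
  · exact Continuous.div (by fun_prop) (by fun_prop)
      (fun θ => pow_ne_zero 3 (ne_of_gt (sqrtX_pos ha θ)))

lemma integral_gd {a : ℝ} (h0 : 0 < a) (h1 : a < 1) :
    (∫ θ in (0:ℝ)..(π/2), ((Real.cos θ ^ 2 - Real.sin θ ^ 2) / Real.sqrt (1 - a ^ 2 * Real.sin θ ^ 2)
      + a ^ 2 * Real.sin θ ^ 2 * Real.cos θ ^ 2 / Real.sqrt (1 - a ^ 2 * Real.sin θ ^ 2) ^ 3)) = 0 := by
  have ha2 : a ^ 2 < 1 := by nlinarith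
  have hg : ∀ θ : ℝ, HasDerivAt (fun θ => Real.sin θ * Real.cos θ / Real.sqrt (1 - a ^ 2 * Real.sin θ ^ 2))
      ((Real.cos θ ^ 2 - Real.sin θ ^ 2) / Real.sqrt (1 - a ^ 2 * Real.sin θ ^ 2)
        + a ^ 2 * Real.sin θ ^ 2 * Real.cos θ ^ 2 / Real.sqrt (1 - a ^ 2 * Real.sin θ ^ 2) ^ 3) θ := by
    intro θ
    have hu : HasDerivAt (fun θ => Real.sin θ * Real.cos θ)
        (Real.cos θ ^ 2 - Real.sin θ ^ 2) θ := by
      have := (Real.hasDerivAt_sin θ).mul (Real.hasDerivAt_cos θ)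
      exact this.congr_deriv (by ring)
    have hw : HasDerivAt (fun θ => 1 - a ^ 2 * Real.sin θ ^ 2)
        (-(a ^ 2 * (2 * Real.sin θ * Real.cos θ))) θ := by
      have hs2 : HasDerivAt (fun θ => Real.sin θ ^ 2) (2 * Real.sin θ * Real.cos θ) θ := by
        have := (Real.hasDerivAt_sin θ).pow 2
        exact this.congr_deriv (by ring)
      simpa using (hs2.const_mul (a ^ 2)).const_sub 1
    have hv : HasDerivAt (fun θ => Real.sqrt (1 - a ^ 2 * Real.sin θ ^ 2))
        (1 / (2 * Real.sqrt (1 - a ^ 2 * Real.sin θ ^ 2)) * -(a ^ 2 * (2 * Real.sin θ * Real.cos θ))) θ :=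
      (Real.hasDerivAt_sqrt (ne_of_gt (X_pos ha2 θ))).comp θ hw
    have hdiv := hu.div hv (ne_of_gt (sqrtX_pos ha2 θ))
    refine hdiv.congr_deriv ?_
    have hrne := ne_of_gt (sqrtX_pos ha2 θ)
    field_simp
    ring_nf
  rw [intervalIntegral.integral_eq_sub_of_hasDerivAt (fun θ _ => hg θ)
    ((contGd ha2).intervalIntegrable _ _)]
  simp [Real.cos_pi_div_two]

lemma split_identity {a s r : ℝ} (h0 : 0 < a) (hr2 : r ^ 2 = 1 - a ^ 2 * s ^ 2)
    (hrne : r ≠ 0) (hcne : (1:ℝ) - a ^ 2 ≠ 0) :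
    a * s ^ 2 / r ^ 3
      = (1/(a*(1-a^2))) * r - (1/a) * (1 / r)
        - (a/(1-a^2)) * (((1 - s ^ 2) - s ^ 2) / r + a ^ 2 * s ^ 2 * (1 - s ^ 2) / r ^ 3) := by
  have hane : a ≠ 0 := ne_of_gt h0
  field_simp
  linear_combination (-(r^2 + a^2*s^2)) * hr2

lemma integral_K_deriv {a : ℝ} (h0 : 0 < a) (h1 : a < 1) :
    (∫ θ in (0:ℝ)..(π/2), a * Real.sin θ ^ 2 / Real.sqrt (1 - a ^ 2 * Real.sin θ ^ 2) ^ 3)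
      = (EllipticE a - (1 - a ^ 2) * EllipticK a) / (a * (1 - a ^ 2)) := by
  have ha2 : a ^ 2 < 1 := by nlinarith
  have hsplit : ∀ θ ∈ Set.uIcc (0:ℝ) (π/2),
      a * Real.sin θ ^ 2 / Real.sqrt (1 - a ^ 2 * Real.sin θ ^ 2) ^ 3
      = (1/(a*(1-a^2))) * Real.sqrt (1 - a ^ 2 * Real.sin θ ^ 2)
        - (1/a) * (1 / Real.sqrt (1 - a ^ 2 * Real.sin θ ^ 2))
        - (a/(1-a^2)) * ((Real.cos θ ^ 2 - Real.sin θ ^ 2) / Real.sqrt (1 - a ^ 2 * Real.sin θ ^ 2)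
          + a ^ 2 * Real.sin θ ^ 2 * Real.cos θ ^ 2 / Real.sqrt (1 - a ^ 2 * Real.sin θ ^ 2) ^ 3) := by
    intro θ _
    have hr2 := Real.sq_sqrt (X_pos ha2 θ).le
    have hrne := ne_of_gt (sqrtX_pos ha2 θ)
    have hc2 : Real.cos θ ^ 2 = 1 - Real.sin θ ^ 2 := by
      rw [← Real.sin_sq_add_cos_sq θ]; ring
    have hcne : (1:ℝ) - a ^ 2 ≠ 0 := by nlinarith
    rw [hc2]
    exact split_identity h0 hr2 hrne hcne
  rw [intervalIntegral.integral_congr hsplit]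
  have i1 := (intE a).const_mul (1/(a*(1-a^2)))
  have i2 := (intK ha2).const_mul (1/a)
  have i3 := ((contGd ha2).intervalIntegrable (μ := volume) (0:ℝ) (π/2)).const_mul (a/(1-a^2))
  rw [intervalIntegral.integral_sub (i1.sub i2) i3,
      intervalIntegral.integral_sub i1 i2,
      intervalIntegral.integral_const_mul, intervalIntegral.integral_const_mul,
      intervalIntegral.integral_const_mul, integral_gd h0 h1]
  rw [← EllipticE, ← EllipticK]
  have hane : a ≠ 0 := ne_of_gt h0
  have hcne : (1:ℝ) - a ^ 2 ≠ 0 := by nlinarith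
  field_simp
  ring

/-- derivative of K under the integral sign -/
lemma hasDerivAt_EllipticK {a : ℝ} (h0 : 0 < a) (h1 : a < 1) :
    HasDerivAt EllipticK ((EllipticE a - (1 - a ^ 2) * EllipticK a) / (a * (1 - a ^ 2))) a := by
  have ha2 : a ^ 2 < 1 := by nlinarith
  have hb0 : (0:ℝ) ≤ (1 + a)/2 := by linarith
  have hb2 : ((1 + a)/2) ^ 2 < 1 := b_sq_lt_one h0 h1
  have hεpos : (0:ℝ) < (1 - a)/2 := by linarith
  have H := intervalIntegral.hasDerivAt_integral_of_dominated_loc_of_deriv_le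
    (F := fun x θ => 1 / Real.sqrt (1 - x ^ 2 * Real.sin θ ^ 2))
    (F' := fun x θ => x * Real.sin θ ^ 2 / Real.sqrt (1 - x ^ 2 * Real.sin θ ^ 2) ^ 3)
    (x₀ := a) (a := 0) (b := π/2) (μ := volume)
    (bound := fun _ => (1 + a)/2 / Real.sqrt (1 - ((1 + a)/2) ^ 2) ^ 3) (Metric.ball_mem_nhds a hεpos)
    (by
      have hev : ∀ᶠ x in nhds a, x ∈ Set.Ioo (-1:ℝ) 1 :=
        isOpen_Ioo.eventually_mem ⟨by linarith, h1⟩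
      filter_upwards [hev] with x hx
      have : x ^ 2 < 1 := by nlinarith [hx.1, hx.2]
      exact (contK this).aestronglyMeasurable)
    (intK ha2)
    (by
      apply Continuous.aestronglyMeasurable
      exact Continuous.div (by fun_prop) (by fun_prop)
        (fun θ => pow_ne_zero 3 (ne_of_gt (sqrtX_pos ha2 θ))))
    (Filter.Eventually.of_forall fun θ _ x hx => by
      have hx2 := (ball_sq_lt h0 h1 hx).le
      simp only [Real.norm_eq_abs, abs_div, abs_mul]
      rw [abs_of_nonneg (pow_nonneg (Real.sqrt_nonneg _) 3)]
      apply div_le_div₀ hb0 (num_bound hb0 hx2)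
        (pow_pos (Real.sqrt_pos.2 (by linarith)) 3)
      exact pow_le_pow_left₀ (Real.sqrt_nonneg _) (denom_bound hb2 hx2) 3)
    (_root_.intervalIntegrable_const)
    (Filter.Eventually.of_forall fun θ _ x hx => by
      have hx2 := ball_sq_lt h0 h1 hx
      exact hasDerivAt_invsqrtX x (X_pos (lt_trans hx2 hb2) θ))
  exact (integral_K_deriv h0 h1) ▸ H.2

noncomputable def L (k : ℝ) : ℝ :=
  EllipticK k * EllipticE (Real.sqrt (1 - k ^ 2)) +
    EllipticE k * EllipticK (Real.sqrt (1 - k ^ 2)) -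
    EllipticK k * EllipticK (Real.sqrt (1 - k ^ 2))

lemma hasDerivAt_L {k : ℝ} (h0 : 0 < k) (h1 : k < 1) : HasDerivAt L 0 k := by
  have hk2 : k ^ 2 < 1 := by nlinarith
  have hpos : (0:ℝ) < 1 - k ^ 2 := by nlinarith
  set c := Real.sqrt (1 - k ^ 2) with hc
  have hc2 : c ^ 2 = 1 - k ^ 2 := Real.sq_sqrt hpos.le
  have hc0 : 0 < c := Real.sqrt_pos.2 hpos
  have hc1 : c < 1 := by nlinarith
  have hinner : HasDerivAt (fun x : ℝ => 1 - x ^ 2) (-(2 * k)) k := by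
    have := (hasDerivAt_pow 2 k).const_sub 1
    simpa using this.congr_deriv (by ring)
  have hcd : HasDerivAt (fun x => Real.sqrt (1 - x ^ 2)) (-k / c) k := by
    have := (Real.hasDerivAt_sqrt (ne_of_gt hpos)).comp k hinner
    exact this.congr_deriv (by rw [← hc]; ring)
  have hK := hasDerivAt_EllipticK h0 h1
  have hE := hasDerivAt_EllipticE h0 h1
  have hKc := (hasDerivAt_EllipticK hc0 hc1).comp k hcd
  have hEc := (hasDerivAt_EllipticE hc0 hc1).comp k hcd
  have hL := ((hK.mul hEc).add (hE.mul hKc)).sub (hK.mul hKc)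
  have hzero :
      (EllipticE k - (1 - k ^ 2) * EllipticK k) / (k * (1 - k ^ 2)) *
            (EllipticE ∘ fun x => Real.sqrt (1 - x ^ 2)) k +
          EllipticK k * ((EllipticE c - EllipticK c) / c * (-k / c)) +
        ((EllipticE k - EllipticK k) / k * (EllipticK ∘ fun x => Real.sqrt (1 - x ^ 2)) k +
          EllipticE k * ((EllipticE c - (1 - c ^ 2) * EllipticK c) / (c * (1 - c ^ 2)) * (-k / c))) -
        ((EllipticE k - (1 - k ^ 2) * EllipticK k) / (k * (1 - k ^ 2)) *
            (EllipticK ∘ fun x => Real.sqrt (1 - x ^ 2)) k +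
          EllipticK k * ((EllipticE c - (1 - c ^ 2) * EllipticK c) / (c * (1 - c ^ 2)) * (-k / c))) = 0 := by
    simp only [Function.comp_apply, ← hc]
    have hkne : k ≠ 0 := ne_of_gt h0
    have hcne : c ≠ 0 := ne_of_gt hc0
    have h1kne : (1:ℝ) - k ^ 2 ≠ 0 := ne_of_gt hpos
    have hcc : c * c = 1 - k ^ 2 := by nlinarith [hc2]
    have h1c : (1 : ℝ) - c ^ 2 = k ^ 2 := by rw [hc2]; ring
    have e1 : (EllipticE c - EllipticK c) / c * (-k / c)
        = -(k * (EllipticE c - EllipticK c)) / (1 - k ^ 2) := by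
      rw [div_mul_div_comm, hcc]; ring
    have e2 : (EllipticE c - (1 - c ^ 2) * EllipticK c) / (c * (1 - c ^ 2)) * (-k / c)
        = -((EllipticE c - k ^ 2 * EllipticK c) / (k * (1 - k ^ 2))) := by
      rw [h1c, div_mul_div_comm, show c * k ^ 2 * c = (1 - k ^ 2) * k ^ 2 by
        linear_combination (k ^ 2) * hcc]
      field_simp
    rw [e1, e2]
    field_simp
    ring
  exact hzero ▸ hL

lemma L_const {x y : ℝ} (hx0 : 0 < x) (hx1 : x < 1) (hy0 : 0 < y) (hy1 : y < 1) :
    L x = L y := by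
  have key : ∀ u v : ℝ, 0 < u → v < 1 → u < v → L u = L v := by
    intro u v hu hv huv
    have hcont : ContinuousOn L (Set.Icc u v) := fun t ht =>
      ((hasDerivAt_L (lt_of_lt_of_le hu ht.1) (lt_of_le_of_lt ht.2 hv)).continuousAt).continuousWithinAt
    have hderiv : ∀ t ∈ Set.Ioo u v, HasDerivAt L 0 t := fun t ht =>
      hasDerivAt_L (lt_trans hu ht.1) (lt_trans ht.2 hv)
    obtain ⟨t, ht, heq⟩ := exists_hasDerivAt_eq_slope L (fun _ => 0) huv hcont hderiv
    have := heq.symm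
    rw [div_eq_iff (by linarith : v - u ≠ 0)] at this
    linarith [this]
  rcases lt_trichotomy x y with h | h | h
  · exact key x y hx0 hy1 h
  · rw [h]
  · exact (key y x hy0 hx1 h).symm

lemma EllipticK_zero : EllipticK 0 = π / 2 := by
  simp [EllipticK]

lemma EllipticE_one : EllipticE 1 = 1 := by
  rw [EllipticE]
  have h : ∀ θ ∈ Set.uIcc (0:ℝ) (π/2),
      Real.sqrt (1 - 1 ^ 2 * Real.sin θ ^ 2) = Real.cos θ := by
    intro θ hθ
    rw [Set.uIcc_of_le (by positivity : (0:ℝ) ≤ π/2)] at hθ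
    have hcos : 0 ≤ Real.cos θ :=
      Real.cos_nonneg_of_mem_Icc ⟨by linarith [hθ.1, Real.pi_pos], by linarith [hθ.2]⟩
    rw [show (1:ℝ) - 1 ^ 2 * Real.sin θ ^ 2 = Real.cos θ ^ 2 by
      have := Real.sin_sq_add_cos_sq θ; linarith]
    exact Real.sqrt_sq hcos
  rw [intervalIntegral.integral_congr h]
  simp

lemma continuousAt_K_zero : ContinuousAt EllipticK 0 := by
  apply intervalIntegral.continuousAt_of_dominated_interval
    (bound := fun _ => (2:ℝ))
  · have hev : ∀ᶠ x in nhds (0:ℝ), x ∈ Set.Ioo (-1:ℝ) 1 :=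
      isOpen_Ioo.eventually_mem (by norm_num)
    filter_upwards [hev] with x hx
    have : x ^ 2 < 1 := by nlinarith [hx.1, hx.2]
    exact (contK this).aestronglyMeasurable
  · have hev : ∀ᶠ x in nhds (0:ℝ), x ∈ Metric.ball (0:ℝ) (1/2) :=
      Metric.ball_mem_nhds 0 (by norm_num)
    filter_upwards [hev] with x hx
    apply Filter.Eventually.of_forall
    intro θ _
    rw [Metric.mem_ball, Real.dist_eq, sub_zero, abs_lt] at hx
    have hx2 : x ^ 2 ≤ (1/2 : ℝ) ^ 2 := by nlinarith [hx.1, hx.2]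
    have hXge : (3/4 : ℝ) ≤ 1 - x ^ 2 * Real.sin θ ^ 2 := by
      nlinarith [Real.sin_sq_le_one θ, sq_nonneg (Real.sin θ), sq_nonneg x]
    have hs : (1/2 : ℝ) ≤ Real.sqrt (1 - x ^ 2 * Real.sin θ ^ 2) := by
      have := Real.sqrt_le_sqrt hXge
      have h34 : (1/2 : ℝ) ≤ Real.sqrt (3/4) := by
        rw [show (1/2 : ℝ) = Real.sqrt ((1/2)^2) by rw [Real.sqrt_sq]; norm_num]
        apply Real.sqrt_le_sqrt; norm_num
      linarith
    rw [Real.norm_eq_abs, abs_of_nonneg (by positivity)]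
    rw [div_le_iff₀ (by linarith)]
    linarith
  · exact _root_.intervalIntegrable_const
  · apply Filter.Eventually.of_forall
    intro θ _
    apply ContinuousAt.div continuousAt_const (by fun_prop)
    simp

lemma continuousAt_E_one : ContinuousAt EllipticE 1 := by
  apply intervalIntegral.continuousAt_of_dominated_interval
    (bound := fun _ => (1:ℝ))
  · exact Filter.Eventually.of_forall fun x => (contE x).aestronglyMeasurable
  · apply Filter.Eventually.of_forall
    intro x
    apply Filter.Eventually.of_forall
    intro θ _
    rw [Real.norm_eq_abs, abs_of_nonneg (Real.sqrt_nonneg _)]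
    calc Real.sqrt (1 - x ^ 2 * Real.sin θ ^ 2) ≤ Real.sqrt 1 :=
          Real.sqrt_le_sqrt (by nlinarith [sq_nonneg (x * Real.sin θ)])
    _ = 1 := Real.sqrt_one
  · exact _root_.intervalIntegrable_const
  · exact Filter.Eventually.of_forall fun θ _ => (by fun_prop : Continuous fun x : ℝ => Real.sqrt (1 - x ^ 2 * Real.sin θ ^ 2)).continuousAt

lemma EK_diff_bound {k : ℝ} (h0 : 0 < k) (h1 : k < 1) :
    |EllipticE k - EllipticK k| ≤ π/2 * (k ^ 2 / Real.sqrt (1 - k ^ 2)) := by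
  have hk2 : k ^ 2 < 1 := by nlinarith
  rw [EllipticE, EllipticK, ← intervalIntegral.integral_sub (intE k) (intK hk2)]
  have := intervalIntegral.norm_integral_le_of_norm_le_const
    (a := 0) (b := π/2) (C := k ^ 2 / Real.sqrt (1 - k ^ 2))
    (f := fun θ => Real.sqrt (1 - k ^ 2 * Real.sin θ ^ 2) - 1 / Real.sqrt (1 - k ^ 2 * Real.sin θ ^ 2))
    (fun θ _ => by
      have hXpos := X_pos hk2 θ
      have hrpos := sqrtX_pos hk2 θ
      have hr2 := Real.sq_sqrt hXpos.le
      have hlb : Real.sqrt (1 - k ^ 2) ≤ Real.sqrt (1 - k ^ 2 * Real.sin θ ^ 2) :=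
        Real.sqrt_le_sqrt (by nlinarith [Real.sin_sq_le_one θ, sq_nonneg (Real.sin θ)])
      have hlbpos : 0 < Real.sqrt (1 - k ^ 2) := Real.sqrt_pos.2 (by linarith)
      have heq : Real.sqrt (1 - k ^ 2 * Real.sin θ ^ 2) - 1 / Real.sqrt (1 - k ^ 2 * Real.sin θ ^ 2)
          = -(k ^ 2 * Real.sin θ ^ 2) / Real.sqrt (1 - k ^ 2 * Real.sin θ ^ 2) := by
        field_simp
        linarith [hr2]
      show |Real.sqrt (1 - k ^ 2 * Real.sin θ ^ 2) - 1 / Real.sqrt (1 - k ^ 2 * Real.sin θ ^ 2)|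
        ≤ k ^ 2 / Real.sqrt (1 - k ^ 2)
      rw [heq, abs_div, abs_neg, abs_of_nonneg (Real.sqrt_nonneg _),
        abs_of_nonneg (by positivity : (0:ℝ) ≤ k ^ 2 * Real.sin θ ^ 2)]
      apply div_le_div₀ (by positivity) (by nlinarith [Real.sin_sq_le_one θ, sq_nonneg (Real.sin θ)]) hlbpos hlb)
  rw [Real.norm_eq_abs] at this
  calc |∫ θ in (0:ℝ)..(π/2), (Real.sqrt (1 - k ^ 2 * Real.sin θ ^ 2) - 1 / Real.sqrt (1 - k ^ 2 * Real.sin θ ^ 2))|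
      ≤ k ^ 2 / Real.sqrt (1 - k ^ 2) * |π/2 - 0| := this
  _ = π/2 * (k ^ 2 / Real.sqrt (1 - k ^ 2)) := by
        rw [abs_of_nonneg (by rw [sub_zero]; positivity : (0:ℝ) ≤ π/2 - 0)]; ring

lemma Kc_bound {k : ℝ} (h0 : 0 < k) (h1 : k < 1) :
    |EllipticK (Real.sqrt (1 - k ^ 2))| ≤ π/2 * (1/k) := by
  have hpos : (0:ℝ) < 1 - k ^ 2 := by nlinarith
  have hc2 : (Real.sqrt (1 - k ^ 2)) ^ 2 = 1 - k ^ 2 := Real.sq_sqrt hpos.le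
  set c := Real.sqrt (1 - k ^ 2)
  rw [EllipticK]
  have hbd := intervalIntegral.norm_integral_le_of_norm_le_const
    (a := 0) (b := π/2) (C := 1/k)
    (f := fun θ => 1 / Real.sqrt (1 - c ^ 2 * Real.sin θ ^ 2))
    (fun θ _ => by
      have hX : k ^ 2 ≤ 1 - c ^ 2 * Real.sin θ ^ 2 := by
        rw [hc2]
        nlinarith [Real.sin_sq_le_one θ, sq_nonneg (Real.sin θ)]
      have hk : k ≤ Real.sqrt (1 - c ^ 2 * Real.sin θ ^ 2) := by
        calc k = Real.sqrt (k ^ 2) := by rw [Real.sqrt_sq h0.le]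
        _ ≤ _ := Real.sqrt_le_sqrt hX
      rw [Real.norm_eq_abs, abs_of_nonneg (by positivity)]
      rw [div_le_div_iff₀ (by linarith) h0]
      linarith)
  rw [Real.norm_eq_abs] at hbd
  calc |∫ θ in (0:ℝ)..(π/2), 1 / Real.sqrt (1 - c ^ 2 * Real.sin θ ^ 2)|
      ≤ 1/k * |π/2 - 0| := hbd
  _ = π/2 * (1/k) := by
      rw [abs_of_nonneg (by rw [sub_zero]; positivity : (0:ℝ) ≤ π/2 - 0)]; ring

lemma tendsto_L : Filter.Tendsto L (nhdsWithin 0 (Set.Ioi 0)) (nhds (π/2)) := by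
  have hc : Filter.Tendsto (fun x : ℝ => Real.sqrt (1 - x ^ 2))
      (nhdsWithin 0 (Set.Ioi 0)) (nhds 1) := by
    have hct : ContinuousAt (fun x : ℝ => Real.sqrt (1 - x ^ 2)) 0 := by fun_prop
    have h' : Filter.Tendsto (fun x : ℝ => Real.sqrt (1 - x ^ 2)) (nhdsWithin 0 (Set.Ioi 0))
        (nhds (Real.sqrt (1 - (0:ℝ) ^ 2))) := hct.continuousWithinAt
    simpa using h'
  have hKt : Filter.Tendsto EllipticK (nhdsWithin 0 (Set.Ioi 0)) (nhds (π/2)) := by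
    have h' : Filter.Tendsto EllipticK (nhdsWithin 0 (Set.Ioi 0)) (nhds (EllipticK 0)) :=
      continuousAt_K_zero.continuousWithinAt
    rwa [EllipticK_zero] at h'
  have hEct : Filter.Tendsto (fun x : ℝ => EllipticE (Real.sqrt (1 - x ^ 2)))
      (nhdsWithin 0 (Set.Ioi 0)) (nhds 1) := by
    have h' : Filter.Tendsto (fun x : ℝ => EllipticE (Real.sqrt (1 - x ^ 2)))
        (nhdsWithin 0 (Set.Ioi 0)) (nhds (EllipticE 1)) := continuousAt_E_one.tendsto.comp hc
    rwa [EllipticE_one] at h'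
  have hprod1 := hKt.mul hEct
  have hprod2 : Filter.Tendsto
      (fun x : ℝ => (EllipticE x - EllipticK x) * EllipticK (Real.sqrt (1 - x ^ 2)))
      (nhdsWithin 0 (Set.Ioi 0)) (nhds 0) := by
    apply squeeze_zero_norm' (a := fun x : ℝ => π/2 * (π/2) * (x / Real.sqrt (1 - x ^ 2)))
    · filter_upwards [Ioo_mem_nhdsGT_of_mem (Set.left_mem_Ico.2 zero_lt_one)] with x hx
      have hb1 := EK_diff_bound hx.1 hx.2
      have hb2 := Kc_bound hx.1 hx.2
      rw [Real.norm_eq_abs, abs_mul]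
      calc |EllipticE x - EllipticK x| * |EllipticK (Real.sqrt (1 - x ^ 2))|
          ≤ (π/2 * (x ^ 2 / Real.sqrt (1 - x ^ 2))) * (π/2 * (1/x)) := by
            apply mul_le_mul hb1 hb2 (abs_nonneg _)
            have : (0:ℝ) < 1 - x ^ 2 := by nlinarith [hx.1, hx.2]
            positivity
      _ = π/2 * (π/2) * (x / Real.sqrt (1 - x ^ 2)) := by
            have hxne : x ≠ 0 := ne_of_gt hx.1
            field_simp
    · have hct : ContinuousAt (fun x : ℝ => π/2 * (π/2) * (x / Real.sqrt (1 - x ^ 2))) 0 := by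
        apply ContinuousAt.mul continuousAt_const
        apply ContinuousAt.div continuousAt_id (by fun_prop)
        simp
      have h' : Filter.Tendsto (fun x : ℝ => π/2 * (π/2) * (x / Real.sqrt (1 - x ^ 2)))
          (nhdsWithin 0 (Set.Ioi 0)) (nhds (π/2 * (π/2) * ((0:ℝ) / Real.sqrt (1 - (0:ℝ) ^ 2)))) :=
        hct.continuousWithinAt
      simpa using h'
  have hsum := hprod1.add hprod2
  have heq : ∀ x : ℝ,
      EllipticK x * EllipticE (Real.sqrt (1 - x ^ 2)) +
        (EllipticE x - EllipticK x) * EllipticK (Real.sqrt (1 - x ^ 2)) = L x := by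
    intro x; rw [L]; ring
  have := hsum.congr heq
  simpa using this

end Legendre

/-- Legendre's relation: for `0 < k < 1`, with `k' = √(1 - k²)`,
`K(k)·E(k') + E(k)·K(k') − K(k)·K(k') = π/2`. -/
theorem legendre_relation (k : ℝ) (hk0 : 0 < k) (hk1 : k < 1) :
    EllipticK k * EllipticE (Real.sqrt (1 - k ^ 2)) +
      EllipticE k * EllipticK (Real.sqrt (1 - k ^ 2)) -
      EllipticK k * EllipticK (Real.sqrt (1 - k ^ 2)) = π / 2 := by
  have h1 : Filter.Tendsto Legendre.L (nhdsWithin 0 (Set.Ioi 0)) (nhds (Legendre.L k)) := by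
    apply Filter.Tendsto.congr' _ tendsto_const_nhds
    filter_upwards [Ioo_mem_nhdsGT_of_mem (Set.left_mem_Ico.2 zero_lt_one)] with x hx
    exact Legendre.L_const hk0 hk1 hx.1 hx.2
  have h2 := Legendre.tendsto_L
  have := tendsto_nhds_unique h1 h2
  simpa [Legendre.L] using this
end

section
/- For every k with 0 < k < 1, the function k ↦ K(k) is differentiable at k with derivative dK/dk = (E(k) − (1−k²)·K(k)) / (k·(1−k²)). -/
open Real

lemma aux_deriv_param (s x : ℝ) (hd : (0:ℝ) < 1 - x ^ 2 * s ^ 2) :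
    HasDerivAt (fun x : ℝ => 1 / Real.sqrt (1 - x ^ 2 * s ^ 2))
      (x * s ^ 2 / Real.sqrt (1 - x ^ 2 * s ^ 2) ^ 3) x := by
  have hs : Real.sqrt (1 - x ^ 2 * s ^ 2) ≠ 0 := ne_of_gt (Real.sqrt_pos.mpr hd)
  have h1 : HasDerivAt (fun x : ℝ => 1 - x ^ 2 * s ^ 2) (-(2 * x * s ^ 2)) x := by
    have h := ((hasDerivAt_pow 2 x).mul_const (s ^ 2)).const_sub 1
    refine h.congr_deriv ?_
    ring
  have h3 := (h1.sqrt (ne_of_gt hd)).inv hs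
  have hq : Real.sqrt (1 - x ^ 2 * s ^ 2) ^ 2 = 1 - x ^ 2 * s ^ 2 := Real.sq_sqrt hd.le
  convert h3 using 1
  · rfl
  · rfl
  · funext y; rw [one_div]; rfl
  · field_simp

lemma aux_deriv_theta (k : ℝ) (hk0 : k ≠ 0) (hk2 : k ^ 2 < 1) (θ : ℝ) :
    HasDerivAt (fun θ => Real.sin θ * Real.cos θ / Real.sqrt (1 - k ^ 2 * Real.sin θ ^ 2))
      (((1 / (k * (1 - k ^ 2))) * Real.sqrt (1 - k ^ 2 * Real.sin θ ^ 2)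
        - (1 / k) * (1 / Real.sqrt (1 - k ^ 2 * Real.sin θ ^ 2))
        - k * Real.sin θ ^ 2 / Real.sqrt (1 - k ^ 2 * Real.sin θ ^ 2) ^ 3) * ((1 - k ^ 2) / k)) θ := by
  have hd : (0:ℝ) < 1 - k ^ 2 * Real.sin θ ^ 2 := by
    nlinarith [Real.sin_sq_le_one θ, sq_nonneg k, sq_nonneg (Real.sin θ)]
  have hs : Real.sqrt (1 - k ^ 2 * Real.sin θ ^ 2) ≠ 0 := ne_of_gt (Real.sqrt_pos.mpr hd)
  have hq : Real.sqrt (1 - k ^ 2 * Real.sin θ ^ 2) ^ 2 = 1 - k ^ 2 * Real.sin θ ^ 2 :=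
    Real.sq_sqrt hd.le
  have hc : Real.cos θ ^ 2 = 1 - Real.sin θ ^ 2 := Real.cos_sq' θ
  have hn := (Real.hasDerivAt_sin θ).mul (Real.hasDerivAt_cos θ)
  have hv : HasDerivAt (fun θ => 1 - k ^ 2 * Real.sin θ ^ 2)
      (-(k ^ 2 * (2 * Real.sin θ * Real.cos θ))) θ := by
    have h := (((Real.hasDerivAt_sin θ).pow 2).const_mul (k ^ 2)).const_sub 1
    refine h.congr_deriv ?_
    ring
  have hw := hv.sqrt hd.ne'
  have hg := hn.div hw hs
  convert hg using 1
  · rfl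
  · rfl
  · rfl
  have hk1 : (1:ℝ) - k ^ 2 ≠ 0 := by nlinarith
  field_simp
  rw [hq]; simp only [Pi.mul_apply]; linear_combination (-k ^ 2) * hc

set_option maxHeartbeats 1000000 in
/-- For `0 < k < 1`, `K` is differentiable at `k` with
`dK/dk = (E(k) − (1 − k²)·K(k)) / (k·(1 − k²))`. -/
theorem hasDerivAt_EllipticK (k : ℝ) (hk0 : 0 < k) (hk1 : k < 1) :
    HasDerivAt EllipticK
      ((EllipticE k - (1 - k ^ 2) * EllipticK k) / (k * (1 - k ^ 2))) k := by
  have hk2 : k ^ 2 < 1 := by nlinarith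
  have hkne : k ≠ 0 := ne_of_gt hk0
  have h1k2 : (1:ℝ) - k ^ 2 ≠ 0 := by nlinarith
  obtain ⟨m, hm⟩ : ∃ m : ℝ, m = (1 + k) / 2 := ⟨_, rfl⟩
  have hm1 : m < 1 := by rw [hm]; linarith
  have hm0 : 0 < m := by rw [hm]; linarith
  have hmpos : 0 < 1 - m ^ 2 := by nlinarith
  obtain ⟨ε, hε⟩ : ∃ e : ℝ, e = (1 - k) / 2 := ⟨_, rfl⟩
  have hε0 : 0 < ε := by rw [hε]; linarith
  have hball : ∀ x ∈ Metric.ball k ε, |x| ≤ m := by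
    intro x hx
    rw [Metric.mem_ball, Real.dist_eq] at hx
    have h1 : |x| ≤ |x - k| + |k| := by
      calc |x| = |x - k + k| := by ring_nf
      _ ≤ |x - k| + |k| := abs_add_le _ _
    rw [abs_of_pos hk0] at h1
    rw [hm]; rw [hε] at hx; linarith
  have hdpos : ∀ x : ℝ, |x| ≤ m → ∀ θ : ℝ, 0 < 1 - x ^ 2 * Real.sin θ ^ 2 := by
    intro x hx θ
    have h1 : x ^ 2 ≤ m ^ 2 := by nlinarith [sq_abs x, abs_nonneg x]
    nlinarith [Real.sin_sq_le_one θ, sq_nonneg x, sq_nonneg (Real.sin θ), h1, hmpos]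
  have hkm : |k| ≤ m := by rw [abs_of_pos hk0, hm]; linarith
  have hdk : ∀ θ : ℝ, 0 < 1 - k ^ 2 * Real.sin θ ^ 2 := hdpos k hkm
  have hcont_inner : Continuous fun θ : ℝ => 1 - k ^ 2 * Real.sin θ ^ 2 :=
    continuous_const.sub (continuous_const.mul (Real.continuous_sin.pow 2))
  have hcont_sqrt : Continuous fun θ : ℝ => Real.sqrt (1 - k ^ 2 * Real.sin θ ^ 2) :=
    Real.continuous_sqrt.comp hcont_inner
  have hsne : ∀ θ : ℝ, Real.sqrt (1 - k ^ 2 * Real.sin θ ^ 2) ≠ 0 := fun θ =>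
    ne_of_gt (Real.sqrt_pos.mpr (hdk θ))
  have hcont_K : Continuous fun θ : ℝ => 1 / Real.sqrt (1 - k ^ 2 * Real.sin θ ^ 2) :=
    continuous_const.div hcont_sqrt hsne
  have hcont_F' : Continuous fun θ : ℝ =>
      k * Real.sin θ ^ 2 / Real.sqrt (1 - k ^ 2 * Real.sin θ ^ 2) ^ 3 :=
    (continuous_const.mul (Real.continuous_sin.pow 2)).div (hcont_sqrt.pow 3)
      (fun θ => pow_ne_zero 3 (hsne θ))
  have hC3 : 0 < Real.sqrt (1 - m ^ 2) ^ 3 := pow_pos (Real.sqrt_pos.mpr hmpos) 3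
  have hmeas : ∀ᶠ x in nhds k, MeasureTheory.AEStronglyMeasurable
      (fun θ : ℝ => 1 / Real.sqrt (1 - x ^ 2 * Real.sin θ ^ 2))
      (MeasureTheory.volume.restrict (Set.uIoc 0 (π / 2))) := by
    apply Filter.Eventually.of_forall
    intro x
    exact (measurable_const.div
      ((Real.continuous_sqrt.comp
        (continuous_const.sub (continuous_const.mul (Real.continuous_sin.pow 2)))).measurable)).aestronglyMeasurable
  have hbound : ∀ᵐ t ∂MeasureTheory.volume, t ∈ Set.uIoc 0 (π / 2) →
      ∀ x ∈ Metric.ball k ε,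
        ‖x * Real.sin t ^ 2 / Real.sqrt (1 - x ^ 2 * Real.sin t ^ 2) ^ 3‖
          ≤ m / Real.sqrt (1 - m ^ 2) ^ 3 := by
    apply Filter.Eventually.of_forall
    intro t _ x hx
    have hxb := hball x hx
    have hdx := hdpos x hxb t
    have hsx : 0 < Real.sqrt (1 - x ^ 2 * Real.sin t ^ 2) := Real.sqrt_pos.mpr hdx
    rw [Real.norm_eq_abs, abs_div, abs_mul]
    rw [abs_of_nonneg (sq_nonneg (Real.sin t)), abs_of_pos (pow_pos hsx 3)]
    have hnum : |x| * Real.sin t ^ 2 ≤ m := by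
      nlinarith [Real.sin_sq_le_one t, abs_nonneg x, sq_nonneg (Real.sin t)]
    have hden : Real.sqrt (1 - m ^ 2) ^ 3 ≤ Real.sqrt (1 - x ^ 2 * Real.sin t ^ 2) ^ 3 := by
      apply pow_le_pow_left₀ (Real.sqrt_nonneg _)
      apply Real.sqrt_le_sqrt
      have hx2 : x ^ 2 ≤ m ^ 2 := by nlinarith [sq_abs x, abs_nonneg x]
      nlinarith [Real.sin_sq_le_one t, sq_nonneg x, sq_nonneg (Real.sin t)]
    exact div_le_div₀ hm0.le hnum hC3 hden
  have hdiff : ∀ᵐ t ∂MeasureTheory.volume, t ∈ Set.uIoc 0 (π / 2) →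
      ∀ x ∈ Metric.ball k ε,
        HasDerivAt (fun x : ℝ => 1 / Real.sqrt (1 - x ^ 2 * Real.sin t ^ 2))
          (x * Real.sin t ^ 2 / Real.sqrt (1 - x ^ 2 * Real.sin t ^ 2) ^ 3) x := by
    apply Filter.Eventually.of_forall
    intro t _ x hx
    exact aux_deriv_param (Real.sin t) x (hdpos x (hball x hx) t)
  have key := intervalIntegral.hasDerivAt_integral_of_dominated_loc_of_deriv_le
    (F := fun x θ => 1 / Real.sqrt (1 - x ^ 2 * Real.sin θ ^ 2))
    (F' := fun x θ => x * Real.sin θ ^ 2 / Real.sqrt (1 - x ^ 2 * Real.sin θ ^ 2) ^ 3)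
    (Metric.ball_mem_nhds k hε0) hmeas (hcont_K.intervalIntegrable 0 (π / 2)) hcont_F'.aestronglyMeasurable
    hbound intervalIntegrable_const hdiff
  have hGderiv : ∀ θ : ℝ, HasDerivAt
      (fun θ => Real.sin θ * Real.cos θ / Real.sqrt (1 - k ^ 2 * Real.sin θ ^ 2))
      (((1 / (k * (1 - k ^ 2))) * Real.sqrt (1 - k ^ 2 * Real.sin θ ^ 2)
        - (1 / k) * (1 / Real.sqrt (1 - k ^ 2 * Real.sin θ ^ 2))
        - k * Real.sin θ ^ 2 / Real.sqrt (1 - k ^ 2 * Real.sin θ ^ 2) ^ 3) * ((1 - k ^ 2) / k)) θ :=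
    aux_deriv_theta k hkne hk2
  have hcI1 : Continuous fun θ : ℝ =>
      (1 / (k * (1 - k ^ 2))) * Real.sqrt (1 - k ^ 2 * Real.sin θ ^ 2) :=
    continuous_const.mul hcont_sqrt
  have hcI2 : Continuous fun θ : ℝ =>
      (1 / k) * (1 / Real.sqrt (1 - k ^ 2 * Real.sin θ ^ 2)) := continuous_const.mul hcont_K
  have hcont_G : Continuous fun θ : ℝ =>
      ((1 / (k * (1 - k ^ 2))) * Real.sqrt (1 - k ^ 2 * Real.sin θ ^ 2)
        - (1 / k) * (1 / Real.sqrt (1 - k ^ 2 * Real.sin θ ^ 2))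
        - k * Real.sin θ ^ 2 / Real.sqrt (1 - k ^ 2 * Real.sin θ ^ 2) ^ 3) * ((1 - k ^ 2) / k) :=
    (((hcI1.sub hcI2).sub hcont_F')).mul continuous_const
  have hFTC : (∫ θ in (0:ℝ)..(π / 2),
      ((1 / (k * (1 - k ^ 2))) * Real.sqrt (1 - k ^ 2 * Real.sin θ ^ 2)
        - (1 / k) * (1 / Real.sqrt (1 - k ^ 2 * Real.sin θ ^ 2))
        - k * Real.sin θ ^ 2 / Real.sqrt (1 - k ^ 2 * Real.sin θ ^ 2) ^ 3) * ((1 - k ^ 2) / k))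
      = 0 := by
    rw [intervalIntegral.integral_eq_sub_of_hasDerivAt (fun θ _ => hGderiv θ)
      (hcont_G.intervalIntegrable 0 (π / 2))]
    simp [Real.cos_pi_div_two]
  have heq : ∀ θ : ℝ, k * Real.sin θ ^ 2 / Real.sqrt (1 - k ^ 2 * Real.sin θ ^ 2) ^ 3
      = (1 / (k * (1 - k ^ 2))) * Real.sqrt (1 - k ^ 2 * Real.sin θ ^ 2)
        - (1 / k) * (1 / Real.sqrt (1 - k ^ 2 * Real.sin θ ^ 2))
        - (((1 / (k * (1 - k ^ 2))) * Real.sqrt (1 - k ^ 2 * Real.sin θ ^ 2)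
          - (1 / k) * (1 / Real.sqrt (1 - k ^ 2 * Real.sin θ ^ 2))
          - k * Real.sin θ ^ 2 / Real.sqrt (1 - k ^ 2 * Real.sin θ ^ 2) ^ 3)
            * ((1 - k ^ 2) / k)) * (k / (1 - k ^ 2)) := by
    intro θ
    have h := hsne θ
    field_simp
    ring
  have hsplit : (∫ θ in (0:ℝ)..(π / 2),
      k * Real.sin θ ^ 2 / Real.sqrt (1 - k ^ 2 * Real.sin θ ^ 2) ^ 3)
      = (EllipticE k - (1 - k ^ 2) * EllipticK k) / (k * (1 - k ^ 2)) := by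
    rw [intervalIntegral.integral_congr (g := fun θ : ℝ =>
        (1 / (k * (1 - k ^ 2))) * Real.sqrt (1 - k ^ 2 * Real.sin θ ^ 2)
        - (1 / k) * (1 / Real.sqrt (1 - k ^ 2 * Real.sin θ ^ 2))
        - (((1 / (k * (1 - k ^ 2))) * Real.sqrt (1 - k ^ 2 * Real.sin θ ^ 2)
          - (1 / k) * (1 / Real.sqrt (1 - k ^ 2 * Real.sin θ ^ 2))
          - k * Real.sin θ ^ 2 / Real.sqrt (1 - k ^ 2 * Real.sin θ ^ 2) ^ 3)
            * ((1 - k ^ 2) / k)) * (k / (1 - k ^ 2))) (fun θ _ => heq θ)]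
    rw [intervalIntegral.integral_sub (f := fun θ : ℝ =>
          (1 / (k * (1 - k ^ 2))) * Real.sqrt (1 - k ^ 2 * Real.sin θ ^ 2)
          - (1 / k) * (1 / Real.sqrt (1 - k ^ 2 * Real.sin θ ^ 2)))
        (g := fun θ : ℝ => (((1 / (k * (1 - k ^ 2))) * Real.sqrt (1 - k ^ 2 * Real.sin θ ^ 2)
          - (1 / k) * (1 / Real.sqrt (1 - k ^ 2 * Real.sin θ ^ 2))
          - k * Real.sin θ ^ 2 / Real.sqrt (1 - k ^ 2 * Real.sin θ ^ 2) ^ 3)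
            * ((1 - k ^ 2) / k)) * (k / (1 - k ^ 2)))
        ((hcI1.sub hcI2).intervalIntegrable 0 (π / 2))
        ((hcont_G.mul continuous_const).intervalIntegrable 0 (π / 2)),
      intervalIntegral.integral_sub (hcI1.intervalIntegrable 0 (π / 2))
        (hcI2.intervalIntegrable 0 (π / 2)),
      intervalIntegral.integral_const_mul, intervalIntegral.integral_const_mul,
      intervalIntegral.integral_mul_const, hFTC]
    unfold EllipticE EllipticK
    field_simp
    ring
  rw [← hsplit]
  exact key.2
end

section
/- The singular value function of the second kind tends to 1/π: as r → ∞ (r real, r > 0), α(r) = E(√(1−k_r²))/K(k_r) − π/(4·K(k_r)²) tends to 1/π. -/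
open Real Filter

/-- The one-variable Jacobi theta function `θ₂(q) = ∑_{n ∈ ℤ} q^((n + 1/2)²)`. -/
noncomputable def theta2 (q : ℝ) : ℝ := ∑' n : ℤ, q ^ (((n : ℝ) + 1 / 2) ^ 2)

/-- The one-variable Jacobi theta function `θ₃(q) = ∑_{n ∈ ℤ} q^(n²)`. -/
noncomputable def theta3 (q : ℝ) : ℝ := ∑' n : ℤ, q ^ ((n : ℝ) ^ 2)

/-- The singular value `k_r = λ*(r) = θ₂(q)²/θ₃(q)²` with `q = exp(−π√r)`. -/
noncomputable def kSing (r : ℝ) : ℝ :=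
  theta2 (Real.exp (-(π * Real.sqrt r))) ^ 2 / theta3 (Real.exp (-(π * Real.sqrt r))) ^ 2

/-- The Ramanujan g-invariant `g_r = ((1 − k_r²)/(2 k_r))^(1/12)`. -/
noncomputable def gRam (r : ℝ) : ℝ := ((1 - kSing r ^ 2) / (2 * kSing r)) ^ ((1 : ℝ) / 12)

/-- The singular value function of the second kind
`α(r) = E(√(1 − k_r²))/K(k_r) − π/(4·K(k_r)²)`. -/
noncomputable def alphaS (r : ℝ) : ℝ :=
  EllipticE (Real.sqrt (1 - kSing r ^ 2)) / EllipticK (kSing r) -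
    π / (4 * EllipticK (kSing r) ^ 2)

section Aux

/-- summability helper over ℕ with exponent at least `n`. -/
lemma summable_rpow_of_exponent_ge {q : ℝ} (hq0 : 0 < q) (hq1 : q < 1) {e : ℕ → ℝ}
    (he : ∀ n : ℕ, (n : ℝ) ≤ e n) : Summable (fun n : ℕ => q ^ (e n)) := by
  apply Summable.of_nonneg_of_le (fun n => (Real.rpow_pos_of_pos hq0 _).le)
    (fun n => ?_) (summable_geometric_of_lt_one hq0.le hq1)
  calc q ^ (e n) ≤ q ^ ((n : ℝ)) :=
        Real.rpow_le_rpow_of_exponent_ge hq0 hq1.le (he n)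
  _ = q ^ n := Real.rpow_natCast q n

lemma theta3_summable {q : ℝ} (hq0 : 0 < q) (hq1 : q < 1) :
    Summable (fun n : ℤ => q ^ ((n : ℝ) ^ 2)) := by
  apply Summable.of_nat_of_neg_add_one
  · apply summable_rpow_of_exponent_ge hq0 hq1
    intro n
    push_cast
    rcases Nat.eq_zero_or_pos n with h | h
    · simp [h]
    · have h1 : (1:ℝ) ≤ n := by exact_mod_cast h
      nlinarith
  · apply summable_rpow_of_exponent_ge hq0 hq1
    intro n
    push_cast
    nlinarith [(Nat.cast_nonneg n : (0:ℝ) ≤ n)]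

lemma theta3_ge_one {q : ℝ} (hq0 : 0 < q) (hq1 : q < 1) : 1 ≤ theta3 q := by
  have h := Summable.le_tsum (theta3_summable hq0 hq1) 0
    (fun j _ => (Real.rpow_pos_of_pos hq0 _).le)
  simpa [theta3] using h

lemma theta2_summable_nat {q : ℝ} (hq0 : 0 < q) (hq1 : q < 1) :
    Summable (fun n : ℕ => q ^ (((n : ℝ) + 1 / 2) ^ 2)) :=
  summable_rpow_of_exponent_ge hq0 hq1 (fun n => by nlinarith [(Nat.cast_nonneg n : (0:ℝ) ≤ n)])

lemma theta2_nonneg {q : ℝ} (hq0 : 0 < q) : 0 ≤ theta2 q :=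
  tsum_nonneg (fun n => (Real.rpow_pos_of_pos hq0 _).le)

lemma theta2_le {q : ℝ} (hq0 : 0 < q) (hq1 : q ≤ 1 / 2) :
    theta2 q ≤ 4 * q ^ ((1:ℝ)/4) := by
  have hq1' : q < 1 := lt_of_le_of_lt hq1 (by norm_num)
  set f : ℤ → ℝ := fun n => q ^ (((n : ℝ) + 1 / 2) ^ 2) with hf
  have key : ∀ g : ℕ → ℝ, (∀ n : ℕ, (n : ℝ) + 1/4 ≤ g n) → Summable (fun n : ℕ => q ^ (g n)) ∧
      (∑' n : ℕ, q ^ (g n)) ≤ 2 * q ^ ((1:ℝ)/4) := by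
    intro g hg
    have hsum : Summable (fun n : ℕ => q ^ (g n)) :=
      summable_rpow_of_exponent_ge hq0 hq1' (fun n => by linarith [hg n])
    refine ⟨hsum, ?_⟩
    have hle : ∀ n : ℕ, q ^ (g n) ≤ q ^ ((1:ℝ)/4) * q ^ n := by
      intro n
      have h1 : q ^ (g n) ≤ q ^ ((1:ℝ)/4 + n) :=
        Real.rpow_le_rpow_of_exponent_ge hq0 hq1'.le (by linarith [hg n])
      calc q ^ (g n) ≤ q ^ ((1:ℝ)/4 + n) := h1
        _ = q ^ ((1:ℝ)/4) * q ^ ((n:ℝ)) := Real.rpow_add hq0 _ _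
        _ = q ^ ((1:ℝ)/4) * q ^ n := by rw [Real.rpow_natCast]
    have hsg : Summable (fun n : ℕ => q ^ ((1:ℝ)/4) * q ^ n) :=
      (summable_geometric_of_lt_one hq0.le hq1').mul_left _
    have hthis := Summable.tsum_le_tsum hle hsum hsg
    rw [tsum_mul_left, tsum_geometric_of_lt_one hq0.le hq1'] at hthis
    refine hthis.trans ?_
    have h2 : (1 - q)⁻¹ ≤ 2 := by
      rw [inv_le_comm₀ (by linarith) (by norm_num)]
      linarith
    have h3 : (0:ℝ) ≤ q ^ ((1:ℝ)/4) := (Real.rpow_pos_of_pos hq0 _).le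
    nlinarith
  have k1 := key (fun n : ℕ => (((n:ℤ) : ℝ) + 1 / 2) ^ 2)
    (fun n => by push_cast; nlinarith [(Nat.cast_nonneg n : (0:ℝ) ≤ n)])
  have k2 := key (fun n : ℕ => (((-((n:ℤ) + 1)) : ℝ) + 1 / 2) ^ 2)
    (fun n => by push_cast; nlinarith [(Nat.cast_nonneg n : (0:ℝ) ≤ n)])
  have e1 : ∀ n : ℕ, q ^ ((((n:ℤ) : ℝ) + 1 / 2) ^ 2) = f ((n:ℤ)) := by
    intro n; simp only [hf]
  have e2 : ∀ n : ℕ, q ^ ((((-((n:ℤ) + 1)) : ℝ) + 1 / 2) ^ 2) = f (-((n:ℤ) + 1)) := by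
    intro n; simp only [hf]; congr 1; push_cast; ring
  have k1s : Summable (fun n : ℕ => f ((n:ℤ))) := k1.1.congr e1
  have k2s : Summable (fun n : ℕ => f (-((n:ℤ) + 1))) := k2.1.congr e2
  have k1t : (∑' n : ℕ, f ((n:ℤ))) ≤ 2 * q ^ ((1:ℝ)/4) := by
    rw [← tsum_congr e1]; exact k1.2
  have k2t : (∑' n : ℕ, f (-((n:ℤ) + 1))) ≤ 2 * q ^ ((1:ℝ)/4) := by
    rw [← tsum_congr e2]; exact k2.2
  have hsplit : theta2 q = (∑' n : ℕ, f ((n:ℤ))) + ∑' n : ℕ, f (-((n:ℤ) + 1)) :=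
    tsum_of_nat_of_neg_add_one k1s k2s
  calc theta2 q = (∑' n : ℕ, f ((n:ℤ))) + ∑' n : ℕ, f (-((n:ℤ) + 1)) := hsplit
    _ ≤ 2 * q ^ ((1:ℝ)/4) + 2 * q ^ ((1:ℝ)/4) := add_le_add k1t k2t
    _ = 4 * q ^ ((1:ℝ)/4) := by ring

lemma kSing_nonneg (r : ℝ) : 0 ≤ kSing r :=
  div_nonneg (sq_nonneg _) (sq_nonneg _)

lemma kSing_tendsto_zero : Tendsto kSing atTop (nhds 0) := by
  have hb : ∀ᶠ r in atTop, kSing r ≤ 16 * Real.exp (-(π * Real.sqrt r) / 2) := by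
    filter_upwards [eventually_ge_atTop (1:ℝ)] with r hr
    set q := Real.exp (-(π * Real.sqrt r)) with hq
    have hsr : (1:ℝ) ≤ Real.sqrt r := by
      rw [show (1:ℝ) = Real.sqrt 1 by simp]
      exact Real.sqrt_le_sqrt hr
    have hq0 : 0 < q := Real.exp_pos _
    have hqhalf : q ≤ 1/2 := by
      have h1 : -(π * Real.sqrt r) ≤ -1 := by nlinarith [Real.pi_gt_three]
      have h2 : q ≤ Real.exp (-1) := Real.exp_le_exp.2 h1
      have h3 : Real.exp (-1) ≤ 1/2 := by
        rw [Real.exp_neg]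
        rw [inv_le_comm₀ (Real.exp_pos 1) (by norm_num)]
        linarith [Real.add_one_le_exp (1:ℝ)]
      linarith
    have hq1 : q < 1 := lt_of_le_of_lt hqhalf (by norm_num)
    have h2 : theta2 q ≤ 4 * q ^ ((1:ℝ)/4) := theta2_le hq0 hqhalf
    have h3 : 1 ≤ theta3 q := theta3_ge_one hq0 hq1
    have h4 : kSing r ≤ theta2 q ^ 2 := by
      rw [kSing]
      apply div_le_self (sq_nonneg _)
      nlinarith
    have h5 : theta2 q ^ 2 ≤ (4 * q ^ ((1:ℝ)/4)) ^ 2 := by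
      have := theta2_nonneg hq0
      nlinarith
    have h6 : (4 * q ^ ((1:ℝ)/4)) ^ 2 = 16 * q ^ ((1:ℝ)/2) := by
      rw [mul_pow, ← Real.rpow_natCast (q ^ ((1:ℝ)/4)) 2, ← Real.rpow_mul hq0.le]
      norm_num
    have h7 : q ^ ((1:ℝ)/2) = Real.exp (-(π * Real.sqrt r) / 2) := by
      rw [hq, ← Real.exp_mul]
      ring_nf
    calc kSing r ≤ theta2 q ^ 2 := h4
      _ ≤ (4 * q ^ ((1:ℝ)/4)) ^ 2 := h5
      _ = 16 * q ^ ((1:ℝ)/2) := h6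
      _ = 16 * Real.exp (-(π * Real.sqrt r) / 2) := by rw [h7]
  have hup : Tendsto (fun r => 16 * Real.exp (-(π * Real.sqrt r) / 2)) atTop (nhds 0) := by
    have hsqrt : Tendsto Real.sqrt atTop atTop := by
      apply tendsto_atTop_atTop.2
      intro b
      exact ⟨b ^ 2, fun a ha => by
        calc b ≤ |b| := le_abs_self b
          _ = Real.sqrt (b ^ 2) := (Real.sqrt_sq_eq_abs b).symm
          _ ≤ Real.sqrt a := Real.sqrt_le_sqrt ha⟩
    have harg : Tendsto (fun r => -(π * Real.sqrt r) / 2) atTop atBot := by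
      apply Tendsto.atBot_div_const (by norm_num)
      apply tendsto_neg_atBot_iff.mpr
      exact (tendsto_const_mul_atTop_of_pos Real.pi_pos).2 hsqrt
    have := (Real.tendsto_exp_atBot).comp harg
    simpa using this.const_mul 16
  have hlow : ∀ᶠ r in atTop, 0 ≤ kSing r := Eventually.of_forall kSing_nonneg
  have h0 : Tendsto (fun _ : ℝ => (0:ℝ)) atTop (nhds 0) := tendsto_const_nhds
  simpa using tendsto_of_tendsto_of_tendsto_of_le_of_le' h0 hup hlow hb

lemma ellipticK_lower {k : ℝ} (hk0 : 0 ≤ k) (hk : k ≤ 1/2) : π/2 ≤ EllipticK k := by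
  have hkey : ∀ θ : ℝ, 3/4 ≤ 1 - k ^ 2 * Real.sin θ ^ 2 := by
    intro θ
    nlinarith [Real.sin_sq_le_one θ, sq_nonneg (Real.sin θ)]
  have hcont : Continuous (fun θ : ℝ => 1 / Real.sqrt (1 - k ^ 2 * Real.sin θ ^ 2)) := by
    apply continuous_const.div
    · exact (continuous_const.sub ((continuous_const.mul
        ((Real.continuous_sin).pow 2)))).sqrt
    · intro θ
      exact ne_of_gt (Real.sqrt_pos.2 (by linarith [hkey θ]))
  have hmono : ∀ θ ∈ Set.Icc (0:ℝ) (π/2),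
      1 ≤ 1 / Real.sqrt (1 - k ^ 2 * Real.sin θ ^ 2) := by
    intro θ _
    rw [le_div_iff₀ (Real.sqrt_pos.2 (by linarith [hkey θ]))]
    rw [one_mul]
    calc Real.sqrt (1 - k ^ 2 * Real.sin θ ^ 2) ≤ Real.sqrt 1 :=
        Real.sqrt_le_sqrt (by nlinarith [sq_nonneg (Real.sin θ), sq_nonneg k])
      _ = 1 := Real.sqrt_one
  have h1 : (∫ _ in (0:ℝ)..(π/2), (1:ℝ)) ≤ EllipticK k := by
    apply intervalIntegral.integral_mono_on (by positivity)
      intervalIntegrable_const (hcont.intervalIntegrable _ _) hmono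
  simpa using h1

lemma ellipticK_upper {k : ℝ} (hk0 : 0 ≤ k) (hk : k ≤ 1/2) :
    EllipticK k ≤ (π/2) / Real.sqrt (1 - k ^ 2) := by
  have hkey : ∀ θ : ℝ, 3/4 ≤ 1 - k ^ 2 * Real.sin θ ^ 2 := by
    intro θ
    nlinarith [Real.sin_sq_le_one θ, sq_nonneg (Real.sin θ)]
  have hk2 : (3:ℝ)/4 ≤ 1 - k ^ 2 := by nlinarith
  have hcont : Continuous (fun θ : ℝ => 1 / Real.sqrt (1 - k ^ 2 * Real.sin θ ^ 2)) := by
    apply continuous_const.div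
    · exact (continuous_const.sub ((continuous_const.mul
        ((Real.continuous_sin).pow 2)))).sqrt
    · intro θ
      exact ne_of_gt (Real.sqrt_pos.2 (by linarith [hkey θ]))
  have hmono : ∀ θ ∈ Set.Icc (0:ℝ) (π/2),
      1 / Real.sqrt (1 - k ^ 2 * Real.sin θ ^ 2) ≤ 1 / Real.sqrt (1 - k ^ 2) := by
    intro θ _
    apply one_div_le_one_div_of_le (Real.sqrt_pos.2 (by linarith))
    apply Real.sqrt_le_sqrt
    nlinarith [Real.sin_sq_le_one θ, sq_nonneg k]
  have h1 : EllipticK k ≤ ∫ _ in (0:ℝ)..(π/2), 1 / Real.sqrt (1 - k ^ 2) := by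
    apply intervalIntegral.integral_mono_on (by positivity)
      (hcont.intervalIntegrable _ _) intervalIntegrable_const hmono
  have h2 : (∫ _ in (0:ℝ)..(π/2), 1 / Real.sqrt (1 - k ^ 2))
      = (π/2) / Real.sqrt (1 - k ^ 2) := by
    simp [div_eq_mul_inv, mul_comm]
  rw [h2] at h1
  exact h1

lemma ellipticE_lower {k : ℝ} (hk0 : 0 ≤ k) (hk : k ≤ 1) :
    1 ≤ EllipticE (Real.sqrt (1 - k ^ 2)) := by
  have hk2 : (0:ℝ) ≤ 1 - k ^ 2 := by nlinarith
  have hsq : Real.sqrt (1 - k ^ 2) ^ 2 = 1 - k ^ 2 := Real.sq_sqrt hk2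
  have hcont : Continuous (fun θ : ℝ =>
      Real.sqrt (1 - Real.sqrt (1 - k ^ 2) ^ 2 * Real.sin θ ^ 2)) :=
    (continuous_const.sub (continuous_const.mul ((Real.continuous_sin).pow 2))).sqrt
  have hmono : ∀ θ ∈ Set.Icc (0:ℝ) (π/2),
      Real.cos θ ≤ Real.sqrt (1 - Real.sqrt (1 - k ^ 2) ^ 2 * Real.sin θ ^ 2) := by
    intro θ hθ
    have hc : 0 ≤ Real.cos θ :=
      Real.cos_nonneg_of_mem_Icc ⟨by linarith [hθ.1, Real.pi_pos], hθ.2⟩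
    rw [hsq]
    have harg : Real.cos θ ^ 2 ≤ 1 - (1 - k ^ 2) * Real.sin θ ^ 2 := by
      nlinarith [Real.sin_sq_add_cos_sq θ, sq_nonneg (Real.sin θ)]
    calc Real.cos θ = Real.sqrt (Real.cos θ ^ 2) := (Real.sqrt_sq hc).symm
      _ ≤ _ := Real.sqrt_le_sqrt harg
  have h1 : (∫ θ in (0:ℝ)..(π/2), Real.cos θ) ≤ EllipticE (Real.sqrt (1 - k ^ 2)) := by
    apply intervalIntegral.integral_mono_on (by positivity)
      (Real.continuous_cos.intervalIntegrable _ _) (hcont.intervalIntegrable _ _) hmono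
  rwa [integral_cos, Real.sin_pi_div_two, Real.sin_zero, sub_zero] at h1

lemma ellipticE_upper {k : ℝ} (hk0 : 0 ≤ k) (hk : k ≤ 1) :
    EllipticE (Real.sqrt (1 - k ^ 2)) ≤ 1 + k := by
  have hk2 : (0:ℝ) ≤ 1 - k ^ 2 := by nlinarith
  have hsq : Real.sqrt (1 - k ^ 2) ^ 2 = 1 - k ^ 2 := Real.sq_sqrt hk2
  have hcont : Continuous (fun θ : ℝ =>
      Real.sqrt (1 - Real.sqrt (1 - k ^ 2) ^ 2 * Real.sin θ ^ 2)) :=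
    (continuous_const.sub (continuous_const.mul ((Real.continuous_sin).pow 2))).sqrt
  have hmono : ∀ θ ∈ Set.Icc (0:ℝ) (π/2),
      Real.sqrt (1 - Real.sqrt (1 - k ^ 2) ^ 2 * Real.sin θ ^ 2)
        ≤ Real.cos θ + k * Real.sin θ := by
    intro θ hθ
    have hc : 0 ≤ Real.cos θ :=
      Real.cos_nonneg_of_mem_Icc ⟨by linarith [hθ.1, Real.pi_pos], hθ.2⟩
    have hs : 0 ≤ Real.sin θ := Real.sin_nonneg_of_nonneg_of_le_pi hθ.1
      (by linarith [hθ.2, Real.pi_pos])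
    rw [hsq]
    have harg : 1 - (1 - k ^ 2) * Real.sin θ ^ 2 ≤ (Real.cos θ + k * Real.sin θ) ^ 2 := by
      nlinarith [Real.sin_sq_add_cos_sq θ, mul_nonneg (mul_nonneg hk0 hs) hc]
    calc Real.sqrt (1 - (1 - k ^ 2) * Real.sin θ ^ 2)
        ≤ Real.sqrt ((Real.cos θ + k * Real.sin θ) ^ 2) := Real.sqrt_le_sqrt harg
      _ = Real.cos θ + k * Real.sin θ := Real.sqrt_sq (by positivity)
  have h1 : EllipticE (Real.sqrt (1 - k ^ 2))
      ≤ ∫ θ in (0:ℝ)..(π/2), (Real.cos θ + k * Real.sin θ) := by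
    apply intervalIntegral.integral_mono_on (by positivity)
      (hcont.intervalIntegrable _ _)
      ((Real.continuous_cos.add (continuous_const.mul Real.continuous_sin)).intervalIntegrable _ _)
      hmono
  have h2 : (∫ θ in (0:ℝ)..(π/2), (Real.cos θ + k * Real.sin θ)) = 1 + k := by
    rw [intervalIntegral.integral_add (g := fun θ => k * Real.sin θ) (Real.continuous_cos.intervalIntegrable _ _)
      ((continuous_const.mul Real.continuous_sin).intervalIntegrable _ _)]
    rw [integral_cos, intervalIntegral.integral_const_mul, integral_sin]
    simp
  rw [h2] at h1
  exact h1

end Aux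

/-- As `r → ∞`, the singular value function of the second kind `α(r)` tends to `1/π`. -/
theorem alphaS_tendsto_one_div_pi :
    Tendsto alphaS atTop (nhds (1 / π)) := by
  have hk := kSing_tendsto_zero
  have hev : ∀ᶠ r in atTop, kSing r ≤ 1/2 :=
    (hk.eventually_lt_const (by norm_num : (0:ℝ) < 1/2)).mono fun r h => h.le
  -- K limit
  have hKlim : Tendsto (fun r => EllipticK (kSing r)) atTop (nhds (π/2)) := by
    have hup : Tendsto (fun r => (π/2) / Real.sqrt (1 - kSing r ^ 2)) atTop
        (nhds (π/2)) := by
      have h1 : Tendsto (fun r => 1 - kSing r ^ 2) atTop (nhds 1) := by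
        have := (tendsto_const_nhds : Tendsto (fun _ : ℝ => (1:ℝ)) atTop (nhds 1)).sub (hk.pow 2)
        simpa using this
      have h2 : Tendsto (fun r => Real.sqrt (1 - kSing r ^ 2)) atTop (nhds 1) := by
        have := (Real.continuous_sqrt.tendsto 1).comp h1
        simpa [Function.comp_def] using this
      have := (tendsto_const_nhds : Tendsto (fun _ : ℝ => π/2) atTop (nhds (π/2))).div h2 one_ne_zero
      simpa [Pi.div_def] using this
    have hlow : Tendsto (fun _ : ℝ => π/2) atTop (nhds (π/2)) := tendsto_const_nhds
    apply tendsto_of_tendsto_of_tendsto_of_le_of_le' hlow hup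
    · filter_upwards [hev] with r h
      exact ellipticK_lower (kSing_nonneg r) h
    · filter_upwards [hev] with r h
      exact ellipticK_upper (kSing_nonneg r) h
  -- E limit
  have hElim : Tendsto (fun r => EllipticE (Real.sqrt (1 - kSing r ^ 2))) atTop
      (nhds 1) := by
    have hup : Tendsto (fun r => 1 + kSing r) atTop (nhds 1) := by
      have := (tendsto_const_nhds : Tendsto (fun _ : ℝ => (1:ℝ)) atTop (nhds 1)).add hk
      simpa using this
    apply tendsto_of_tendsto_of_tendsto_of_le_of_le' tendsto_const_nhds hup
    · filter_upwards [hev] with r h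
      exact ellipticE_lower (kSing_nonneg r) (by linarith)
    · filter_upwards [hev] with r h
      exact ellipticE_upper (kSing_nonneg r) (by linarith)
  have hπ : (π:ℝ)/2 ≠ 0 := by positivity
  have h4K : Tendsto (fun r => 4 * EllipticK (kSing r) ^ 2) atTop
      (nhds (4 * (π/2) ^ 2)) := tendsto_const_nhds.mul (hKlim.pow 2)
  have hmain := (hElim.div hKlim hπ).sub
    ((tendsto_const_nhds : Tendsto (fun _ : ℝ => π) atTop (nhds π)).div h4K (by positivity))
  have hval : 1 / (π/2) - π / (4 * (π/2) ^ 2) = 1 / π := by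
    field_simp
    ring
  rw [hval] at hmain
  unfold alphaS
  exact hmain
end
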